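/- Let C be an abelian category and let X and Z be cochain complexes over C. The following are equivalent: (1) there exist a cochain complex Y and quasi-isomorphisms f : Y ⟶ X and g : Y ⟶ Z; (2) there exist a cochain complex W and quasi-isomorphisms f′ : X ⟶ W and g′ : Z ⟶ W. -/

import Mathlib

open CategoryTheory CategoryTheory.Limits

lemma stmt14_aux {C : Type*} [Category C] [Abelian C]
    {K L : CochainComplex C ℤ} (φ : K ⟶ L) :
    (HomotopyCategory.subcategoryAcyclic C).trW
      ((HomotopyCategory.quotient C (ComplexShape.up ℤ)).map φ) ↔ QuasiIso φ := by
  rw [← HomotopyCategory.quasiIso_eq_subcategoryAcyclic_W,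
    HomotopyCategory.quotient_map_mem_quasiIso_iff,
    HomologicalComplex.mem_quasiIso_iff]

/-- For cochain complexes `X` and `Z` over an abelian category, there exists a
complex `Y` with quasi-isomorphisms `Y ⟶ X` and `Y ⟶ Z` if and only if there
exists a complex `W` with quasi-isomorphisms `X ⟶ W` and `Z ⟶ W`. -/
theorem stmt14 {C : Type*} [Category C] [Abelian C]
    (X Z : CochainComplex C ℤ) :
    (∃ (Y : CochainComplex C ℤ) (f : Y ⟶ X) (g : Y ⟶ Z),
      QuasiIso f ∧ QuasiIso g) ↔
    (∃ (W : CochainComplex C ℤ) (f' : X ⟶ W) (g' : Z ⟶ W),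
      QuasiIso f' ∧ QuasiIso g') := by
  set Q := HomotopyCategory.quotient C (ComplexShape.up ℤ) with hQ
  constructor
  · rintro ⟨Y, f, g, hf, hg⟩
    obtain ⟨ψ, hψ⟩ := MorphismProperty.HasLeftCalculusOfFractions.exists_leftFraction
      (MorphismProperty.RightFraction.mk (Q.map f) ((stmt14_aux f).2 hf) (Q.map g))
    obtain ⟨f', hf'⟩ := Q.map_surjective (X := X) (Y := ψ.Y'.as) ψ.f
    obtain ⟨g', hg'⟩ := Q.map_surjective (X := Z) (Y := ψ.Y'.as) ψ.s
    have hg'q : QuasiIso g' := (stmt14_aux g').1 (by rw [hg']; exact ψ.hs)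
    have hcomp : QuasiIso (f ≫ f') := by
      have : Q.map (g ≫ g') = Q.map (f ≫ f') := by
        simp only [Functor.map_comp, hf', hg']
        exact hψ
      have h1 : QuasiIso (g ≫ g') := inferInstance
      rw [← stmt14_aux] at h1 ⊢
      rwa [← this]
    have : QuasiIso f' := by
      rw [← quasiIso_iff_comp_left f f']
      exact hcomp
    exact ⟨ψ.Y'.as, f', g', this, hg'q⟩
  · rintro ⟨W, f', g', hf', hg'⟩
    obtain ⟨ψ, hψ⟩ := MorphismProperty.HasRightCalculusOfFractions.exists_rightFraction
      (MorphismProperty.LeftFraction.mk (Q.map f') (Q.map g') ((stmt14_aux g').2 hg'))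
    obtain ⟨f, hf⟩ := Q.map_surjective (X := ψ.X'.as) (Y := X) ψ.s
    obtain ⟨g, hg⟩ := Q.map_surjective (X := ψ.X'.as) (Y := Z) ψ.f
    have hfq : QuasiIso f := (stmt14_aux f).1 (by rw [hf]; exact ψ.hs)
    have hcomp : QuasiIso (g ≫ g') := by
      have : Q.map (g ≫ g') = Q.map (f ≫ f') := by
        simp only [Functor.map_comp, hf, hg]
        exact hψ.symm
      have h1 : QuasiIso (f ≫ f') := inferInstance
      rw [← stmt14_aux] at h1 ⊢
      rwa [this]
    have : QuasiIso g := by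
      rw [← quasiIso_iff_comp_right g g']
      exact hcomp
    exact ⟨ψ.X'.as, f, g, hfq, this⟩
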